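/- For positive semidefinite ρ, σ, one has ker(ρ^{-1} # σ) ⊆ ker(ρ^{-1/2} P ρ P ρ^{-1/2}), where P is the orthogonal projection onto Image(ρ^{1/2} σ ρ^{1/2}) and ρ^{-1} # σ = ρ^{-1/2}(ρ^{1/2} σ ρ^{1/2})^{1/2} ρ^{-1/2} with pseudoinverses. -/

import Mathlib

open Matrix Kronecker
open scoped ComplexOrder

noncomputable section
attribute [local instance] Classical.propDecidable

/-- Moore–Penrose pseudoinverse of a square complex matrix. -/
def pinv {n : Type*} [Fintype n] [DecidableEq n] (A : Matrix n n ℂ) : Matrix n n ℂ :=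
  if h : ∃ B : Matrix n n ℂ,
      A * B * A = A ∧ B * A * B = B ∧ (A * B)ᴴ = A * B ∧ (B * A)ᴴ = B * A
  then h.choose else 0

/-- Positive semidefinite square root (junk value `0` if the matrix is not PSD). -/
def msqrt {n : Type*} [Fintype n] [DecidableEq n] (A : Matrix n n ℂ) : Matrix n n ℂ :=
  if h : A.PosSemidef then
    (h.1.eigenvectorUnitary : Matrix n n ℂ) * diagonal ((↑) ∘ (h.1.eigenvalues · |>.sqrt))
      * (star h.1.eigenvectorUnitary : Matrix n n ℂ)
  else 0

/-- `sgn(X) = U sgn(Σ) V*` for an SVD `X = U Σ V*`; equivalently `X (X* X)^{-1/2}`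
with the Moore–Penrose pseudoinverse. -/
def msgn {n : Type*} [Fintype n] [DecidableEq n] (X : Matrix n n ℂ) : Matrix n n ℂ :=
  X * pinv (msqrt (Xᴴ * X))

/-- Matrix geometric mean `A # B = A^{1/2} (A^{-1/2} B A^{-1/2})^{1/2} A^{1/2}`
(with Moore–Penrose pseudoinverses). -/
def geo {n : Type*} [Fintype n] [DecidableEq n] (A B : Matrix n n ℂ) : Matrix n n ℂ :=
  msqrt A * msqrt (pinv (msqrt A) * B * pinv (msqrt A)) * msqrt A

/-- The unnormalized maximally entangled state `|Ω⟩ = ∑ i, |i⟩ ⊗ |i⟩`. -/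
def omegaVec (d : ℕ) : Fin d × Fin d → ℂ := fun p => if p.1 = p.2 then 1 else 0

/-- Reduced density matrix of `|C⟩⟨C|` on the first subsystem
(partial trace over the second subsystem). -/
def reducedA {d : ℕ} (C : Fin d × Fin d → ℂ) : Matrix (Fin d) (Fin d) ℂ :=
  Matrix.of fun i j => ∑ k, C (i, k) * star (C (j, k))

/-- Partial trace over the first subsystem of the operator `|D⟩⟨C|`. -/
def trA {d : ℕ} (D C : Fin d × Fin d → ℂ) : Matrix (Fin d) (Fin d) ℂ :=
  Matrix.of fun j l => ∑ i, D (i, j) * star (C (i, l))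

/-- `ℓ²→ℓ²` operator norm (largest singular value). -/
def opNorm {n : Type*} [Fintype n] [DecidableEq n] (A : Matrix n n ℂ) : ℝ :=
  ‖(Matrix.toEuclideanCLM (𝕜 := ℂ) A : EuclideanSpace ℂ n →L[ℂ] EuclideanSpace ℂ n)‖

/-- `P` is the orthogonal projection onto the image (column space) of `A`. -/
def IsOrthProjOnto {n : Type*} [Fintype n] [DecidableEq n] (P A : Matrix n n ℂ) : Prop :=
  Pᴴ = P ∧ P * P = P ∧ LinearMap.range P.mulVecLin = LinearMap.range A.mulVecLin

/-- `η` is the smallest nonzero eigenvalue of the Hermitian matrix `M`. -/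
def IsSmallestNonzeroEigenvalue {n : Type*} [Fintype n] [DecidableEq n]
    (M : Matrix n n ℂ) (η : ℝ) : Prop :=
  ∃ hM : M.IsHermitian, η ≠ 0 ∧ (∃ i, hM.eigenvalues i = η) ∧
    ∀ i, hM.eigenvalues i ≠ 0 → η ≤ hM.eigenvalues i

section SqrtAux
open scoped MatrixOrder

def Matrix.PosSemidef.sqrt {n : Type*} [Fintype n] [DecidableEq n] {A : Matrix n n ℂ}
    (_ : A.PosSemidef) : Matrix n n ℂ := CFC.sqrt A

lemma Matrix.PosSemidef.posSemidef_sqrt {n : Type*} [Fintype n] [DecidableEq n]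
    {A : Matrix n n ℂ} (hA : A.PosSemidef) : hA.sqrt.PosSemidef :=
  (CFC.sqrt_nonneg A).posSemidef

lemma Matrix.PosSemidef.sqrt_mul_self {n : Type*} [Fintype n] [DecidableEq n]
    {A : Matrix n n ℂ} (hA : A.PosSemidef) : hA.sqrt * hA.sqrt = A :=
  CFC.sqrt_mul_sqrt_self A hA.nonneg

lemma Matrix.PosSemidef.eq_sqrt_of_sq_eq {n : Type*} [Fintype n] [DecidableEq n]
    {A B : Matrix n n ℂ} (hA : A.PosSemidef) (hB : B.PosSemidef) (h : A ^ 2 = B) :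
    A = hB.sqrt :=
  (CFC.sqrt_unique (by rw [← sq]; exact h) hA.nonneg).symm

lemma msqrt_eq_sqrt_aux {n : Type*} [Fintype n] [DecidableEq n] {A : Matrix n n ℂ}
    (hA : A.PosSemidef) : msqrt A = hA.sqrt := by
  rw [msqrt, dif_pos hA, Matrix.PosSemidef.sqrt, CFC.sqrt_eq_real_sqrt A hA.nonneg,
    cfcₙ_eq_cfc (hf := Real.continuous_sqrt.continuousOn) (hf0 := Real.sqrt_zero), hA.1.cfc_eq, Matrix.IsHermitian.cfc, Unitary.conjStarAlgAut_apply]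
  rfl

end SqrtAux

section AuxMP
variable {n : Type*} [Fintype n] [DecidableEq n]

/-- The four Penrose conditions. -/
def MP (A B : Matrix n n ℂ) : Prop :=
  A * B * A = A ∧ B * A * B = B ∧ (A * B)ᴴ = A * B ∧ (B * A)ᴴ = B * A

lemma MP.symm {A B : Matrix n n ℂ} (h : MP A B) : MP B A :=
  ⟨h.2.1, h.1, h.2.2.2, h.2.2.1⟩

lemma MP.unique {A B C : Matrix n n ℂ} (hB : MP A B) (hC : MP A C) : B = C := by
  obtain ⟨b1, b2, b3, b4⟩ := hB
  obtain ⟨c1, c2, c3, c4⟩ := hC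
  have hAB : A * B = A * C := by
    have e1 : (A * C) * (A * B) = A * B := by rw [← mul_assoc, c1]
    have e2 : (A * C) * (A * B) = A * C := by
      calc (A * C) * (A * B) = (A * C)ᴴ * (A * B)ᴴ := by rw [c3, b3]
        _ = ((A * B) * (A * C))ᴴ := (conjTranspose_mul _ _).symm
        _ = ((A * B * A) * C)ᴴ := by rw [mul_assoc (A * B) A C]
        _ = (A * C)ᴴ := by rw [b1]
        _ = A * C := c3
    rw [← e1, e2]
  have hBA : B * A = C * A := by
    have e1 : (B * A) * (C * A) = B * A := by
      rw [mul_assoc, ← mul_assoc A C A, c1]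
    have e2 : (B * A) * (C * A) = C * A := by
      calc (B * A) * (C * A) = (B * A)ᴴ * (C * A)ᴴ := by rw [b4, c4]
        _ = ((C * A) * (B * A))ᴴ := (conjTranspose_mul _ _).symm
        _ = (C * (A * B * A))ᴴ := by rw [mul_assoc C A (B * A), ← mul_assoc A B A]
        _ = (C * A)ᴴ := by rw [b1]
        _ = C * A := c4
    rw [← e1, e2]
  calc B = B * A * B := b2.symm
    _ = C * A * B := by rw [hBA]
    _ = C * (A * B) := by rw [mul_assoc]
    _ = C * (A * C) := by rw [hAB]
    _ = C * A * C := by rw [← mul_assoc]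
    _ = C := c2

lemma pinv_eq_of_MP {A B : Matrix n n ℂ} (h : MP A B) : pinv A = B := by
  have hex : ∃ C : Matrix n n ℂ,
      A * C * A = A ∧ C * A * C = C ∧ (A * C)ᴴ = A * C ∧ (C * A)ᴴ = C * A := ⟨B, h⟩
  rw [pinv, dif_pos hex]
  exact MP.unique hex.choose_spec h

lemma msqrt_eq {A : Matrix n n ℂ} (hA : A.PosSemidef) : msqrt A = hA.sqrt := by
  exact msqrt_eq_sqrt_aux hA

variable {V : Matrix n n ℂ}

/-- sandwich multiplication for conjugations by a unitary `V`. -/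
lemma sand_mul (hV : star V * V = 1) (f g : n → ℝ) :
    (V * diagonal (fun i => (f i : ℂ)) * star V) * (V * diagonal (fun i => (g i : ℂ)) * star V)
      = V * diagonal (fun i => ((f i * g i : ℝ) : ℂ)) * star V := by
  have cancel : ∀ Z : Matrix n n ℂ, star V * (V * Z) = Z := fun Z => by
    rw [← mul_assoc, hV, one_mul]
  simp only [mul_assoc, cancel]
  have hdd : (fun i => (f i : ℂ) * (g i : ℂ)) = fun i => ((f i * g i : ℝ) : ℂ) :=
    funext fun i => (Complex.ofReal_mul _ _).symm
  rw [← mul_assoc (diagonal _) (diagonal _), diagonal_mul_diagonal, hdd]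

lemma sand_ext {f g : n → ℝ} (h : ∀ i, f i = g i) :
    V * diagonal (fun i => (f i : ℂ)) * star V = V * diagonal (fun i => (g i : ℂ)) * star V := by
  have : f = g := funext h
  rw [this]

lemma sand_herm (f : n → ℝ) :
    (V * diagonal (fun i => (f i : ℂ)) * star V)ᴴ
      = V * diagonal (fun i => (f i : ℂ)) * star V := by
  have hd : (diagonal (fun i => (f i : ℂ)))ᴴ = diagonal (fun i => (f i : ℂ)) := by
    rw [diagonal_conjTranspose]
    have : star (fun i => (f i : ℂ)) = fun i => (f i : ℂ) := funext fun i => by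
      rw [Pi.star_apply, Complex.star_def, Complex.conj_ofReal]
    rw [this]
  simp only [star_eq_conjTranspose, conjTranspose_mul, conjTranspose_conjTranspose, hd, mul_assoc]

lemma sand_psd (f : n → ℝ) (hf : ∀ i, 0 ≤ f i) :
    (V * diagonal (fun i => (f i : ℂ)) * star V).PosSemidef := by
  have hd : (diagonal (fun i => (f i : ℂ))).PosSemidef :=
    posSemidef_diagonal_iff.mpr fun i => Complex.zero_le_real.mpr (hf i)
  simpa only [star_eq_conjTranspose] using hd.mul_mul_conjTranspose_same V

lemma sand_MP (hV : star V * V = 1) {f g : n → ℝ} (h1 : ∀ i, f i * g i * f i = f i)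
    (h2 : ∀ i, g i * f i * g i = g i) :
    MP (V * diagonal (fun i => (f i : ℂ)) * star V) (V * diagonal (fun i => (g i : ℂ)) * star V) := by
  refine ⟨?_, ?_, ?_, ?_⟩
  · rw [sand_mul hV, sand_mul hV]
    exact sand_ext h1
  · rw [sand_mul hV, sand_mul hV]
    exact sand_ext h2
  · rw [sand_mul hV]; exact sand_herm _
  · rw [sand_mul hV]; exact sand_herm _

end AuxMP

theorem ker_geo_mean_subset {n : Type*} [Fintype n] [DecidableEq n]
    (ρ σ P : Matrix n n ℂ) (hρ : ρ.PosSemidef) (hσ : σ.PosSemidef)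
    (hP : IsOrthProjOnto P (msqrt ρ * σ * msqrt ρ)) :
    LinearMap.ker (geo (pinv ρ) σ).mulVecLin ≤
      LinearMap.ker (pinv (msqrt ρ) * P * ρ * P * pinv (msqrt ρ)).mulVecLin := by
  classical
  set V : Matrix n n ℂ := (hρ.1.eigenvectorUnitary : Matrix n n ℂ) with hVdef
  have hV : star V * V = 1 := mem_unitaryGroup_iff'.mp hρ.1.eigenvectorUnitary.2
  set d : n → ℝ := hρ.1.eigenvalues with hddef
  have hd0 : ∀ i, 0 ≤ d i := fun i => hρ.eigenvalues_nonneg i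
  -- the key matrices
  set S : Matrix n n ℂ := V * diagonal (fun i => ((Real.sqrt (d i) : ℝ) : ℂ)) * star V with hSdef
  set T : Matrix n n ℂ := V * diagonal (fun i => (((Real.sqrt (d i))⁻¹ : ℝ) : ℂ)) * star V
    with hTdef
  set W : Matrix n n ℂ := V * diagonal (fun i => (((d i)⁻¹ : ℝ) : ℂ)) * star V with hWdef
  have hρeq : ρ = V * diagonal (fun i => ((d i : ℝ) : ℂ)) * star V := by
    exact hρ.1.spectral_theorem
  -- `S` is the sqrt of `ρ`
  have hSpsd : S.PosSemidef := sand_psd _ (fun i => Real.sqrt_nonneg _)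
  have hSsq : S ^ 2 = ρ := by
    rw [pow_two, hSdef, sand_mul hV, hρeq]
    exact sand_ext fun i => Real.mul_self_sqrt (hd0 i)
  have hS : msqrt ρ = S := by
    rw [msqrt_eq hρ, ← hSpsd.eq_sqrt_of_sq_eq hρ hSsq]
  -- `T` is the pseudoinverse of `S`
  have hMPST : MP S T := by
    refine sand_MP hV (fun i => ?_) (fun i => ?_)
    · rcases eq_or_ne (Real.sqrt (d i)) 0 with h | h
      · simp [h]
      · field_simp
    · rcases eq_or_ne (Real.sqrt (d i)) 0 with h | h
      · simp [h]
      · field_simp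
  have hpinvS : pinv S = T := pinv_eq_of_MP hMPST
  have hTpsd : T.PosSemidef := sand_psd _ (fun i => inv_nonneg.mpr (Real.sqrt_nonneg _))
  have hTherm : Tᴴ = T := sand_herm _
  -- `W` is the pseudoinverse of `ρ`
  have hpinvρ : pinv ρ = W := by
    rw [hρeq]
    refine pinv_eq_of_MP (sand_MP hV (fun i => ?_) (fun i => ?_))
    · rcases eq_or_ne (d i) 0 with h | h
      · simp [h]
      · field_simp
    · rcases eq_or_ne (d i) 0 with h | h
      · simp [h]
      · field_simp
  have hWpsd : W.PosSemidef := sand_psd _ (fun i => inv_nonneg.mpr (hd0 i))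
  have hTsq : T ^ 2 = W := by
    rw [pow_two, hTdef, sand_mul hV, hWdef]
    exact sand_ext fun i => by rw [← mul_inv, Real.mul_self_sqrt (hd0 i)]
  -- `T` is the sqrt of `pinv ρ`
  have hmsqrtW : msqrt (pinv ρ) = T := by
    rw [hpinvρ, msqrt_eq hWpsd, ← hTpsd.eq_sqrt_of_sq_eq hWpsd hTsq]
  have hpinvT : pinv T = S := pinv_eq_of_MP hMPST.symm
  -- identify the geometric mean
  set M : Matrix n n ℂ := S * σ * S with hMdef
  have hMpsd : M.PosSemidef := by
    have := hσ.mul_mul_conjTranspose_same S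
    rwa [show Sᴴ = S from sand_herm _] at this
  have hgeo : geo (pinv ρ) σ = T * msqrt M * T := by
    rw [geo, hmsqrtW, hpinvT, hMdef]
  -- main kernel argument
  intro x hx
  have h0 : (T * msqrt M * T) *ᵥ x = 0 := by
    have := LinearMap.mem_ker.mp hx
    rwa [mulVecLin_apply, hgeo] at this
  rw [msqrt_eq hMpsd] at h0
  obtain ⟨y, hydef⟩ : ∃ y : n → ℂ, y = T *ᵥ x := ⟨_, rfl⟩
  have hstary : star y = star x ᵥ* T := by rw [hydef, star_mulVec, hTherm]
  have h1 : hMpsd.sqrt *ᵥ y = 0 := by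
    refine (hMpsd.posSemidef_sqrt.dotProduct_mulVec_zero_iff y).mp ?_
    calc star y ⬝ᵥ hMpsd.sqrt *ᵥ y
        = (star x ᵥ* T) ⬝ᵥ hMpsd.sqrt *ᵥ y := by rw [hstary]
      _ = star x ⬝ᵥ (T *ᵥ (hMpsd.sqrt *ᵥ y)) := (dotProduct_mulVec _ _ _).symm
      _ = star x ⬝ᵥ ((T * hMpsd.sqrt * T) *ᵥ x) := by
          rw [hydef, mulVec_mulVec, mulVec_mulVec]
      _ = 0 := by rw [h0, dotProduct_zero]
  have h2 : M *ᵥ y = 0 := by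
    rw [← hMpsd.sqrt_mul_self, ← mulVec_mulVec, h1, mulVec_zero]
  -- `P` kills `y`
  obtain ⟨hPh, hPP, hPrange⟩ := hP
  rw [hS] at hPrange
  have h3 : P *ᵥ y = 0 := by
    have hmem : P.mulVecLin y ∈ LinearMap.range M.mulVecLin := by
      rw [← hPrange]; exact LinearMap.mem_range_self _ y
    obtain ⟨u, hu⟩ := hmem
    have hPy : P *ᵥ y = M *ᵥ u := by
      rw [← mulVecLin_apply, ← hu, mulVecLin_apply]
    refine dotProduct_star_self_eq_zero.mp ?_
    calc star (P *ᵥ y) ⬝ᵥ (P *ᵥ y)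
        = (star y ᵥ* P) ⬝ᵥ (P *ᵥ y) := by rw [star_mulVec, hPh]
      _ = star y ⬝ᵥ (P *ᵥ (P *ᵥ y)) := (dotProduct_mulVec _ _ _).symm
      _ = star y ⬝ᵥ ((P * P) *ᵥ y) := by rw [mulVec_mulVec]
      _ = star y ⬝ᵥ (P *ᵥ y) := by rw [hPP]
      _ = star y ⬝ᵥ (M *ᵥ u) := by rw [hPy]
      _ = (star y ᵥ* M) ⬝ᵥ u := dotProduct_mulVec _ _ _
      _ = star (M *ᵥ y) ⬝ᵥ u := by
          conv_rhs => rw [star_mulVec, hMpsd.1]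
      _ = 0 := by rw [h2, star_zero, zero_dotProduct]
  -- conclude
  rw [LinearMap.mem_ker, mulVecLin_apply, hS, hpinvS]
  have hsplit : (T * P * ρ * P * T) *ᵥ x = T *ᵥ (P *ᵥ (ρ *ᵥ (P *ᵥ (T *ᵥ x)))) := by
    simp only [← mulVec_mulVec]
  rw [hsplit, ← hydef, h3]
  simp only [mulVec_zero]
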